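/- Let V be a finite-dimensional real vector space and W = V ⊕ V* with the natural pairing ⟨X+ξ, Y+η⟩ = ½(ξ(Y)+η(X)). Suppose G : W → W is a symmetric involution (G² = id, ⟨Gu,v⟩ = ⟨u,Gv⟩) such that ⟨Gu,u⟩ > 0 for all u ≠ 0, and let V₊, V₋ be its (+1)- and (−1)-eigenspaces. Then V₊ = graph(g+b) and V₋ = graph(−g+b) for a unique positive definite symmetric form g and skew form b on V. -/

import Mathlib

set_option maxHeartbeats 1000000

theorem generalized_metric_graph_decomposition
    (V : Type*) [AddCommGroup V] [Module ℝ V] [FiniteDimensional ℝ V]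
    (p : (V × Module.Dual ℝ V) →ₗ[ℝ] (V × Module.Dual ℝ V) →ₗ[ℝ] ℝ)
    (hp : ∀ u v : V × Module.Dual ℝ V, p u v = (1/2) * (u.2 v.1 + v.2 u.1))
    (G : Module.End ℝ (V × Module.Dual ℝ V))
    (hG2 : G ^ 2 = 1)
    (hGsym : ∀ u v, p (G u) v = p u (G v))
    (hGpos : ∀ u, u ≠ 0 → 0 < p (G u) u) :
    ∃! gb : (V →ₗ[ℝ] Module.Dual ℝ V) × (V →ₗ[ℝ] Module.Dual ℝ V),
      (∀ X Y : V, gb.1 X Y = gb.1 Y X) ∧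
      (∀ X : V, X ≠ 0 → 0 < gb.1 X X) ∧
      (∀ X Y : V, gb.2 X Y = -gb.2 Y X) ∧
      Module.End.eigenspace G 1 = LinearMap.graph (gb.1 + gb.2) ∧
      Module.End.eigenspace G (-1) = LinearMap.graph (-gb.1 + gb.2) := by
  classical
  set W := V × Module.Dual ℝ V
  have hGG : ∀ u : W, G (G u) = u := by
    intro u
    have := congrArg (fun f : Module.End ℝ W => f u) hG2
    simpa [pow_two, Module.End.mul_apply] using this
  set Vp := Module.End.eigenspace G 1 with hVp
  set Vm := Module.End.eigenspace G (-1) with hVm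
  have memp : ∀ u : W, u ∈ Vp ↔ G u = u := by
    intro u; rw [hVp, Module.End.mem_eigenspace_iff, one_smul]
  have memm : ∀ u : W, u ∈ Vm ↔ G u = -u := by
    intro u; rw [hVm, Module.End.mem_eigenspace_iff, neg_one_smul]
  -- self pairing formula
  have hself : ∀ u : W, p u u = u.2 u.1 := by
    intro u; rw [hp]; ring
  -- positivity on Vp
  have hpos : ∀ u : W, u ∈ Vp → u ≠ 0 → 0 < p u u := by
    intro u hu hne
    have := hGpos u hne
    rwa [(memp u).mp hu] at this
  have hneg : ∀ u : W, u ∈ Vm → u ≠ 0 → p u u < 0 := by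
    intro u hu hne
    have := hGpos u hne
    rw [(memm u).mp hu, map_neg, LinearMap.neg_apply] at this
    linarith
  -- elements of Vp / Vm with first component 0 are 0
  have hker_p : ∀ u : W, u ∈ Vp → u.1 = 0 → u = 0 := by
    intro u hu h1
    by_contra hne
    have := hpos u hu hne
    rw [hself, h1, map_zero] at this
    exact lt_irrefl 0 this
  have hker_m : ∀ u : W, u ∈ Vm → u.1 = 0 → u = 0 := by
    intro u hu h1
    by_contra hne
    have := hneg u hu hne
    rw [hself, h1, map_zero] at this
    exact lt_irrefl 0 this
  -- orthogonality
  have horth : ∀ u v : W, u ∈ Vp → v ∈ Vm → p u v = 0 := by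
    intro u v hu hv
    have h1 := hGsym u v
    rw [(memp u).mp hu, (memm v).mp hv, map_neg] at h1
    linarith
  -- restriction of fst to Vp and Vm
  let fp : Vp →ₗ[ℝ] V := (LinearMap.fst ℝ V (Module.Dual ℝ V)).comp Vp.subtype
  let fm : Vm →ₗ[ℝ] V := (LinearMap.fst ℝ V (Module.Dual ℝ V)).comp Vm.subtype
  have hfp_inj : Function.Injective fp := by
    intro x y hxy
    have hxy' : (x : W).1 = (y : W).1 := hxy
    have h0 := hker_p ((x : W) - y) (Vp.sub_mem x.2 y.2)
      (by rw [Prod.fst_sub, hxy', sub_self])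
    exact Subtype.ext (by rwa [sub_eq_zero] at h0)
  have hfm_inj : Function.Injective fm := by
    intro x y hxy
    have hxy' : (x : W).1 = (y : W).1 := hxy
    have h0 := hker_m ((x : W) - y) (Vm.sub_mem x.2 y.2)
      (by rw [Prod.fst_sub, hxy', sub_self])
    exact Subtype.ext (by rwa [sub_eq_zero] at h0)
  -- dimensions
  have hsup : Vp ⊔ Vm = ⊤ := by
    rw [Submodule.eq_top_iff']
    intro u
    have h1 : ((1:ℝ)/2) • (u + G u) ∈ Vp := by
      rw [memp]
      simp only [map_smul, map_add, hGG]
      rw [add_comm (G u) u]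
    have h2 : ((1:ℝ)/2) • (u - G u) ∈ Vm := by
      rw [memm]
      simp only [map_smul, map_sub, hGG, smul_sub, neg_sub]
    have : u = ((1:ℝ)/2) • (u + G u) + ((1:ℝ)/2) • (u - G u) := by
      rw [← smul_add]
      rw [show u + G u + (u - G u) = (2:ℝ) • u by rw [two_smul]; abel]
      rw [smul_smul]; norm_num
    rw [this]
    exact Submodule.add_mem_sup h1 h2
  have hinf : Vp ⊓ Vm = ⊥ := by
    rw [Submodule.eq_bot_iff]
    intro u hu
    have h1 := (memp u).mp hu.1
    have h2 := (memm u).mp hu.2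
    have huu : u = -u := h1.symm.trans h2
    rw [eq_neg_iff_add_eq_zero] at huu
    have h3 : (2:ℝ) • u = 0 := by rw [two_smul]; exact huu
    have := smul_eq_zero.mp h3
    simpa using this
  have hdimW : Module.finrank ℝ W = 2 * Module.finrank ℝ V := by
    rw [Module.finrank_prod, Subspace.dual_finrank_eq, two_mul]
  have hdims : Module.finrank ℝ Vp + Module.finrank ℝ Vm = 2 * Module.finrank ℝ V := by
    have := Submodule.finrank_sup_add_finrank_inf_eq Vp Vm
    rw [hsup, hinf] at this
    simpa [finrank_top, hdimW, two_mul] using this.symm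
  have hle_p : Module.finrank ℝ Vp ≤ Module.finrank ℝ V :=
    LinearMap.finrank_le_finrank_of_injective hfp_inj
  have hle_m : Module.finrank ℝ Vm ≤ Module.finrank ℝ V :=
    LinearMap.finrank_le_finrank_of_injective hfm_inj
  have hdim_p : Module.finrank ℝ Vp = Module.finrank ℝ V := by omega
  have hdim_m : Module.finrank ℝ Vm = Module.finrank ℝ V := by omega
  have hfp_bij : Function.Bijective fp :=
    ⟨hfp_inj, (LinearMap.injective_iff_surjective_of_finrank_eq_finrank (K := ℝ) (V := Vp) (V₂ := V) (f := fp) hdim_p).mp hfp_inj⟩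
  have hfm_bij : Function.Bijective fm :=
    ⟨hfm_inj, (LinearMap.injective_iff_surjective_of_finrank_eq_finrank (K := ℝ) (V := Vm) (V₂ := V) (f := fm) hdim_m).mp hfm_inj⟩
  let ep : Vp ≃ₗ[ℝ] V := LinearEquiv.ofBijective fp hfp_bij
  let em : Vm ≃ₗ[ℝ] V := LinearEquiv.ofBijective fm hfm_bij
  let Ap : V →ₗ[ℝ] Module.Dual ℝ V :=
    ((LinearMap.snd ℝ V (Module.Dual ℝ V)).comp Vp.subtype).comp (ep.symm : V →ₗ[ℝ] Vp)
  let Am : V →ₗ[ℝ] Module.Dual ℝ V :=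
    ((LinearMap.snd ℝ V (Module.Dual ℝ V)).comp Vm.subtype).comp (em.symm : V →ₗ[ℝ] Vm)
  have hApfst : ∀ X : V, ((ep.symm X : W)).1 = X := by
    intro X
    have : ep (ep.symm X) = X := ep.apply_symm_apply X
    exact this
  have hAmfst : ∀ X : V, ((em.symm X : W)).1 = X := by
    intro X
    have : em (em.symm X) = X := em.apply_symm_apply X
    exact this
  have hApmem : ∀ X : V, (X, Ap X) ∈ Vp := by
    intro X
    have h : ((ep.symm X : W)) = (X, Ap X) := by
      ext
      · exact hApfst X
      · rfl
    rw [← h]; exact (ep.symm X).2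
  have hAmmem : ∀ X : V, (X, Am X) ∈ Vm := by
    intro X
    have h : ((em.symm X : W)) = (X, Am X) := by
      ext
      · exact hAmfst X
      · rfl
    rw [← h]; exact (em.symm X).2
  have hVp_graph : Vp = LinearMap.graph Ap := by
    apply le_antisymm
    · intro u hu
      rw [LinearMap.mem_graph_iff]
      have h1 : ep ⟨u, hu⟩ = u.1 := rfl
      have h2 : ep.symm u.1 = ⟨u, hu⟩ := by rw [← h1, ep.symm_apply_apply]
      show u.2 = ((ep.symm u.1 : W)).2
      rw [h2]
    · intro u hu
      rw [LinearMap.mem_graph_iff] at hu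
      have h : u = (u.1, Ap u.1) := by
        ext
        · rfl
        · exact congrFun (congrArg _ hu) _
      rw [h]; exact hApmem u.1
  have hVm_graph : Vm = LinearMap.graph Am := by
    apply le_antisymm
    · intro u hu
      rw [LinearMap.mem_graph_iff]
      have h1 : em ⟨u, hu⟩ = u.1 := rfl
      have h2 : em.symm u.1 = ⟨u, hu⟩ := by rw [← h1, em.symm_apply_apply]
      show u.2 = ((em.symm u.1 : W)).2
      rw [h2]
    · intro u hu
      rw [LinearMap.mem_graph_iff] at hu
      have h : u = (u.1, Am u.1) := by
        ext
        · rfl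
        · exact congrFun (congrArg _ hu) _
      rw [h]; exact hAmmem u.1
  -- cross relation
  have hcross : ∀ X Y : V, Am Y X = - Ap X Y := by
    intro X Y
    have h0 := horth (X, Ap X) (Y, Am Y) (hApmem X) (hAmmem Y)
    rw [hp] at h0
    have h1 : (1/2 : ℝ) * (Ap X Y + Am Y X) = 0 := h0
    linarith
  -- define g and b
  set gmap : V →ₗ[ℝ] Module.Dual ℝ V := ((1:ℝ)/2) • (Ap - Am) with hgmap
  set bmap : V →ₗ[ℝ] Module.Dual ℝ V := ((1:ℝ)/2) • (Ap + Am) with hbmap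
  have hgval : ∀ X Y : V, gmap X Y = ((1:ℝ)/2) * (Ap X Y - Am X Y) := by
    intro X Y
    rw [hgmap]
    simp [LinearMap.smul_apply, LinearMap.sub_apply, mul_sub]
  have hbval : ∀ X Y : V, bmap X Y = ((1:ℝ)/2) * (Ap X Y + Am X Y) := by
    intro X Y
    rw [hbmap]
    simp [LinearMap.smul_apply, LinearMap.add_apply, mul_add]
  have hApeq : gmap + bmap = Ap := by
    ext X Y
    have := hgval X Y
    have := hbval X Y
    simp only [LinearMap.add_apply]
    rw [hgval, hbval]
    ring
  have hAmeq : -gmap + bmap = Am := by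
    ext X Y
    simp only [LinearMap.add_apply, LinearMap.neg_apply]
    rw [hgval, hbval]
    ring
  have hgsym : ∀ X Y : V, gmap X Y = gmap Y X := by
    intro X Y
    rw [hgval, hgval, hcross X Y, hcross Y X]
    ring
  have hgposd : ∀ X : V, X ≠ 0 → 0 < gmap X X := by
    intro X hX
    have hne : ((X, Ap X) : W) ≠ 0 := by
      intro h
      exact hX (congrArg Prod.fst h)
    have h1 := hpos _ (hApmem X) hne
    rw [hself] at h1
    have h2 : (0:ℝ) < Ap X X := h1
    rw [hgval, hcross X X]
    linarith
  have hbskew : ∀ X Y : V, bmap X Y = -bmap Y X := by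
    intro X Y
    rw [hbval, hbval, hcross X Y, hcross Y X]
    ring
  refine ⟨(gmap, bmap), ⟨hgsym, hgposd, hbskew,
    by show Vp = LinearMap.graph (gmap + bmap); rw [hVp_graph, hApeq],
    by show Vm = LinearMap.graph (-gmap + bmap); rw [hVm_graph, hAmeq]⟩, ?_⟩
  rintro ⟨g', b'⟩ ⟨-, -, -, hg1', hg2'⟩
  have hg1 : Vp = LinearMap.graph (g' + b') := hg1'
  have hg2 : Vm = LinearMap.graph (-g' + b') := hg2'
  have heq1 : g' + b' = Ap := by
    ext X Y
    have h1 : ((X, (g' + b') X) : W) ∈ LinearMap.graph (g' + b') :=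
      (LinearMap.mem_graph_iff _ _).mpr rfl
    rw [← hg1, hVp_graph, LinearMap.mem_graph_iff] at h1
    have h2 : (g' + b') X = Ap X := h1
    rw [LinearMap.add_apply, ← LinearMap.add_apply g' b', h2]
  have heq2 : -g' + b' = Am := by
    ext X Y
    have h1 : ((X, (-g' + b') X) : W) ∈ LinearMap.graph (-g' + b') :=
      (LinearMap.mem_graph_iff _ _).mpr rfl
    rw [← hg2, hVm_graph, LinearMap.mem_graph_iff] at h1
    have h2 : (-g' + b') X = Am X := h1
    rw [LinearMap.add_apply, ← LinearMap.add_apply (-g') b', h2]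
  have hg' : g' = gmap := by
    ext X Y
    rw [hgval, ← heq1, ← heq2]
    simp only [LinearMap.add_apply, LinearMap.neg_apply]
    ring
  have hb' : b' = bmap := by
    ext X Y
    rw [hbval, ← heq1, ← heq2]
    simp only [LinearMap.add_apply, LinearMap.neg_apply]
    ring
  exact Prod.ext hg' hb'
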